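/- Let n ≥ 2, m ≥ 1 be integers and c₁ > 0. There exist a constant C > 0 and a positive integer N ≥ 3 such that: for every integer k with |k| ≥ N, every t ∈ [−π/2, 3π/2), every λ ∈ ℂ with |λ − (2πk + t)^n| ≤ c₁ |k|^{n−1−1/(2m)}, and every real d > 2|k|, one has Σ_{p ∈ ℤ, |p| > d} |p|^{n−2} / |λ − (2πp + t)^n| ≤ C/d. -/

import Mathlib

open Real Finset

lemma tail_sum_part (d : ℝ) (hd : 1 ≤ d) (s' : Finset {p : ℤ // d < |(p:ℝ)|})
    (hinj : Set.InjOn (fun p : {p : ℤ // d < |(p:ℝ)|} => p.1.natAbs) s') :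
    ∑ p ∈ s', (1:ℝ)/((p.1:ℝ))^2 ≤ 2/((⌊d⌋₊ : ℝ) + 1) := by
  have hd0 : 0 < d := by linarith
  set T : Finset ℕ := s'.image (fun p => p.1.natAbs) with hT
  have hTd : ∀ j ∈ T, d < (j:ℝ) := by
    intro j hj
    obtain ⟨p, hp, rfl⟩ := Finset.mem_image.mp hj
    have := p.2
    rwa [← Int.cast_abs, Int.abs_eq_natAbs, Int.cast_natCast] at this
  set B : ℕ := (T.sup id) + 1 with hB
  have hsub : T ⊆ Finset.Ioo ⌊d⌋₊ B := by
    intro j hj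
    rw [Finset.mem_Ioo]
    exact ⟨(Nat.floor_lt hd0.le).mpr (hTd j hj), Nat.lt_succ_of_le (Finset.le_sup (f := id) hj)⟩
  have e1 : ∑ p ∈ s', (1:ℝ)/((p.1:ℝ))^2 = ∑ j ∈ T, 1/(j:ℝ)^2 := by
    rw [hT, Finset.sum_image (fun p hp q hq h => hinj hp hq h)]
    refine Finset.sum_congr rfl (fun p _ => ?_)
    rw [Nat.cast_natAbs, Int.cast_abs, sq_abs]
  rw [e1]
  calc ∑ j ∈ T, 1/(j:ℝ)^2 ≤ ∑ j ∈ Finset.Ioo ⌊d⌋₊ B, 1/(j:ℝ)^2 :=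
        Finset.sum_le_sum_of_subset_of_nonneg hsub (fun j _ _ => by positivity)
    _ ≤ 2/((⌊d⌋₊ : ℝ) + 1) := by
        simpa [one_div] using sum_Ioo_inv_sq_le (α := ℝ) ⌊d⌋₊ B

lemma tail_sum_bound (d : ℝ) (hd : 1 ≤ d) (s : Finset {p : ℤ // d < |(p:ℝ)|}) :
    ∑ p ∈ s, (1:ℝ)/((p.1:ℝ))^2 ≤ 4/d := by
  classical
  have hd0 : 0 < d := by linarith
  have h1 := tail_sum_part d hd (s.filter (fun p => 0 ≤ p.1))
    (by intro p hp q hq h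
        simp only [Finset.coe_filter, Set.mem_setOf_eq] at hp hq
        have h' : p.1.natAbs = q.1.natAbs := h
        ext1; omega)
  have h2 := tail_sum_part d hd (s.filter (fun p => ¬ 0 ≤ p.1))
    (by intro p hp q hq h
        simp only [Finset.coe_filter, Set.mem_setOf_eq] at hp hq
        have h' : p.1.natAbs = q.1.natAbs := h
        ext1; omega)
  have hsplit := Finset.sum_filter_add_sum_filter_not s (fun p => 0 ≤ p.1)
    (fun p => (1:ℝ)/((p.1:ℝ))^2)
  have hfl : d ≤ (⌊d⌋₊:ℝ) + 1 := (Nat.lt_floor_add_one d).le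
  have : (2:ℝ)/((⌊d⌋₊:ℝ)+1) ≤ 2/d := by gcongr
  have h4 : (4:ℝ)/d = 2/d + 2/d := by ring
  linarith

set_option maxHeartbeats 1000000 in
/-- Let `n ≥ 2, m ≥ 1` be integers and `c₁ > 0`. There exist a constant
`C > 0` and a positive integer `N ≥ 3` such that: for every integer `k` with `|k| ≥ N`,
every `t ∈ [−π/2, 3π/2)`, every `λ ∈ ℂ` with `|λ − (2πk + t)^n| ≤ c₁ |k|^{n−1−1/(2m)}`,
and every real `d > 2|k|`, one has
`Σ_{p ∈ ℤ, |p| > d} |p|^{n−2} / |λ − (2πp + t)^n| ≤ C/d`. -/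
theorem stmt_5 (n m : ℕ) (hn : 2 ≤ n) (hm : 1 ≤ m) (c₁ : ℝ) (hc₁ : 0 < c₁) :
    ∃ C : ℝ, 0 < C ∧ ∃ N : ℕ, 3 ≤ N ∧
      ∀ k : ℤ, (N : ℤ) ≤ |k| →
        ∀ t ∈ Set.Ico (-(π/2)) (3*π/2),
          ∀ lam : ℂ,
            ‖lam - ((2*π*(k:ℝ) + t : ℝ) : ℂ)^n‖
              ≤ c₁ * |(k:ℝ)| ^ ((n:ℝ) - 1 - 1/(2*(m:ℝ))) →
            ∀ d : ℝ, 2*|(k:ℝ)| < d →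
              Summable (fun p : {p : ℤ // d < |(p:ℝ)|} =>
                |(p.1:ℝ)|^(n-2) / ‖lam - ((2*π*(p.1:ℝ) + t : ℝ) : ℂ)^n‖) ∧
              (∑' p : {p : ℤ // d < |(p:ℝ)|},
                  |(p.1:ℝ)|^(n-2) / ‖lam - ((2*π*(p.1:ℝ) + t : ℝ) : ℂ)^n‖)
                ≤ C / d := by
  refine ⟨4, by norm_num, max 9 ⌈c₁⌉₊, le_trans (by norm_num) (le_max_left _ _), ?_⟩
  intro k hk t ht lam hlam d hd
  have hKnat : ((max 9 ⌈c₁⌉₊ : ℕ) : ℝ) ≤ |(k:ℝ)| := by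
    rw [← Int.cast_abs]
    exact_mod_cast hk
  have hK9 : (9:ℝ) ≤ |(k:ℝ)| := by
    refine le_trans ?_ hKnat
    exact_mod_cast Nat.le_max_left 9 ⌈c₁⌉₊
  have hc₁K : c₁ ≤ |(k:ℝ)| := by
    refine (Nat.le_ceil c₁).trans (le_trans ?_ hKnat)
    exact_mod_cast Nat.le_max_right 9 ⌈c₁⌉₊
  have hd18 : (18:ℝ) < d := by linarith
  have hd0 : (0:ℝ) < d := by linarith
  have hK0 : (0:ℝ) < |(k:ℝ)| := by linarith
  -- bound on |t|
  have ht' : |t| ≤ 3*π/2 := by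
    rw [abs_le]
    have hπ := pi_pos
    constructor
    · nlinarith [ht.1]
    · nlinarith [ht.2]
  have hπ1 : π < 3.15 := pi_lt_d2
  have hπ2 : 3.14 < π := pi_gt_d2
  -- bound on |lam|
  have hlam8 : ‖lam‖ ≤ 2 * (8 * |(k:ℝ)|)^n := by
    have htri : ‖lam‖ ≤ ‖lam - ((2*π*(k:ℝ) + t : ℝ) : ℂ)^n‖
        + ‖((2*π*(k:ℝ) + t : ℝ) : ℂ)^n‖ := by
      calc ‖lam‖
          = ‖(lam - ((2*π*(k:ℝ) + t : ℝ) : ℂ)^n) + ((2*π*(k:ℝ) + t : ℝ) : ℂ)^n‖ := by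
            ring_nf
        _ ≤ _ := norm_add_le _ _
    have habs : ‖((2*π*(k:ℝ) + t : ℝ) : ℂ)^n‖ = |2*π*(k:ℝ) + t|^n := by
      rw [norm_pow, Complex.norm_real, Real.norm_eq_abs]
    have hzk : |2*π*(k:ℝ) + t| ≤ 8 * |(k:ℝ)| := by
      have h1 : |2*π*(k:ℝ) + t| ≤ |2*π*(k:ℝ)| + |t| := abs_add_le _ _
      have h2 : |2*π*(k:ℝ)| = 2*π*|(k:ℝ)| := by
        rw [abs_mul]
        rw [abs_of_pos (by positivity : (0:ℝ) < 2*π)]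
      nlinarith [abs_le.mp ht']
    have hpow : |2*π*(k:ℝ) + t|^n ≤ (8 * |(k:ℝ)|)^n :=
      pow_le_pow_left₀ (abs_nonneg _) hzk n
    -- bound the perturbation term by |k|^n
    have hrpow : c₁ * |(k:ℝ)| ^ ((n:ℝ) - 1 - 1/(2*(m:ℝ))) ≤ (8 * |(k:ℝ)|)^n := by
      have hK1 : (1:ℝ) ≤ |(k:ℝ)| := by linarith
      have hexp : (n:ℝ) - 1 - 1/(2*(m:ℝ)) ≤ ((n - 1 : ℕ) : ℝ) := by
        have hm0 : (0:ℝ) < (m:ℝ) := by exact_mod_cast hm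
        have : ((n - 1 : ℕ) : ℝ) = (n:ℝ) - 1 := by
          have : 1 ≤ n := by omega
          push_cast [Nat.cast_sub this]
          ring
        rw [this]
        have : 0 < 1/(2*(m:ℝ)) := by positivity
        linarith
      have h1 : |(k:ℝ)| ^ ((n:ℝ) - 1 - 1/(2*(m:ℝ))) ≤ |(k:ℝ)| ^ (((n - 1 : ℕ)  : ℝ)) :=
        rpow_le_rpow_of_exponent_le hK1 hexp
      rw [rpow_natCast] at h1
      have h2 : c₁ * |(k:ℝ)| ^ (n - 1) ≤ |(k:ℝ)| * |(k:ℝ)| ^ (n - 1) :=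
        mul_le_mul_of_nonneg_right hc₁K (pow_nonneg (abs_nonneg _) _)
      have h3 : |(k:ℝ)| * |(k:ℝ)| ^ (n - 1) = |(k:ℝ)| ^ n := by
        rw [← pow_succ']
        congr 1
        omega
      have h4 : |(k:ℝ)| ^ n ≤ (8 * |(k:ℝ)|)^n := by
        apply pow_le_pow_left₀ (abs_nonneg _)
        nlinarith
      calc c₁ * |(k:ℝ)| ^ ((n:ℝ) - 1 - 1/(2*(m:ℝ)))
          ≤ c₁ * |(k:ℝ)| ^ (n - 1) := by
            apply mul_le_mul_of_nonneg_left h1 hc₁.le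
        _ ≤ |(k:ℝ)| ^ n := h2.trans_eq h3
        _ ≤ _ := h4
    calc ‖lam‖ ≤ _ := htri
      _ ≤ (8 * |(k:ℝ)|)^n + (8 * |(k:ℝ)|)^n := by
          rw [habs] at htri ⊢
          exact add_le_add (hlam.trans hrpow) hpow
      _ = 2 * (8 * |(k:ℝ)|)^n := by ring
  -- pointwise bound
  have hbound : ∀ p : {p : ℤ // d < |(p:ℝ)|},
      |(p.1:ℝ)|^(n-2) / ‖lam - ((2*π*(p.1:ℝ) + t : ℝ) : ℂ)^n‖
        ≤ 1/((p.1:ℝ))^2 := by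
    intro ⟨p, hp⟩
    simp only
    set P := |(p:ℝ)| with hP
    have hP18 : (18:ℝ) < P := lt_trans hd18 hp
    have hP0 : (0:ℝ) < P := by linarith
    have hKP : 2 * |(k:ℝ)| < P := lt_trans hd hp
    -- lower bound for |2πp + t|
    have hzp : 6 * P ≤ |2*π*(p:ℝ) + t| := by
      have h1 : |2*π*(p:ℝ)| ≤ |2*π*(p:ℝ) + t| + |t| := by
        calc |2*π*(p:ℝ)| = |(2*π*(p:ℝ) + t) + (-t)| := by ring_nf
          _ ≤ |2*π*(p:ℝ) + t| + |(-t)| := abs_add_le _ _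
          _ = |2*π*(p:ℝ) + t| + |t| := by rw [abs_neg]
      have h2 : |2*π*(p:ℝ)| = 2*π*P := by
        rw [hP, abs_mul, abs_of_pos (by positivity : (0:ℝ) < 2*π)]
      nlinarith [abs_le.mp ht']
    -- lower bound on denominator
    have hDen : P ^ n ≤ ‖lam - ((2*π*(p:ℝ) + t : ℝ) : ℂ)^n‖ := by
      have habs : ‖((2*π*(p:ℝ) + t : ℝ) : ℂ)^n‖ = |2*π*(p:ℝ) + t|^n := by
        rw [norm_pow, Complex.norm_real, Real.norm_eq_abs]
      have h1 : ‖((2*π*(p:ℝ) + t : ℝ) : ℂ)^n‖ - ‖lam‖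
          ≤ ‖lam - ((2*π*(p:ℝ) + t : ℝ) : ℂ)^n‖ := by
        rw [norm_sub_rev]
        exact norm_sub_norm_le _ _
      have h2 : (6*P)^n ≤ |2*π*(p:ℝ) + t|^n := pow_le_pow_left₀ (by positivity) hzp n
      have h3 : ‖lam‖ ≤ 2 * (4*P)^n := by
        refine hlam8.trans ?_
        have : (8 * |(k:ℝ)|)^n ≤ (4*P)^n := by
          apply pow_le_pow_left₀ (by positivity)
          linarith
        linarith
      -- numeric: 6^n ≥ 2*4^n + 1
      have hnum : 2 * (4:ℝ)^n + 1 ≤ 6^n := by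
        have e1 : (6:ℝ)^n = (3/2)^n * 4^n := by
          rw [← mul_pow]; norm_num
        have e2 : (9/4:ℝ) ≤ (3/2:ℝ)^n := by
          calc (9/4:ℝ) = (3/2)^2 := by norm_num
            _ ≤ (3/2)^n := pow_le_pow_right₀ (by norm_num) hn
        have e3 : (16:ℝ) ≤ 4^n := by
          calc (16:ℝ) = 4^2 := by norm_num
            _ ≤ 4^n := pow_le_pow_right₀ (by norm_num) hn
        nlinarith
      have hPn : (0:ℝ) ≤ P^n := by positivity
      have h6 : (6*P)^n = 6^n * P^n := mul_pow _ _ _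
      have h4 : (4*P)^n = 4^n * P^n := mul_pow _ _ _
      rw [habs] at h1
      have key : P^n ≤ (6*P)^n - 2*(4*P)^n := by
        rw [h6, h4]
        linarith [mul_le_mul_of_nonneg_right hnum hPn]
      linarith
    have hDpos : (0:ℝ) < ‖lam - ((2*π*(p:ℝ) + t : ℝ) : ℂ)^n‖ :=
      lt_of_lt_of_le (by positivity) hDen
    calc P^(n-2) / ‖lam - ((2*π*(p:ℝ) + t : ℝ) : ℂ)^n‖
        ≤ P^(n-2) / P^n := by
          gcongr
      _ = 1/P^2 := by
          have : P^n = P^(n-2) * P^2 := by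
            rw [← pow_add]
            congr 1
            omega
          rw [this]
          field_simp
      _ = 1/((p:ℝ))^2 := by rw [hP, sq_abs]
  -- summability of the comparison series
  have hcomp : Summable (fun p : {p : ℤ // d < |(p:ℝ)|} => 1/((p.1:ℝ))^2) := by
    have : Summable (fun p : ℤ => 1/((p:ℝ))^2) := summable_one_div_int_pow.mpr one_lt_two
    exact this.subtype _
  have hnonneg : ∀ p : {p : ℤ // d < |(p:ℝ)|},
      0 ≤ |(p.1:ℝ)|^(n-2) / ‖lam - ((2*π*(p.1:ℝ) + t : ℝ) : ℂ)^n‖ := by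
    intro p
    positivity
  have hsum : Summable (fun p : {p : ℤ // d < |(p:ℝ)|} =>
      |(p.1:ℝ)|^(n-2) / ‖lam - ((2*π*(p.1:ℝ) + t : ℝ) : ℂ)^n‖) :=
    Summable.of_nonneg_of_le hnonneg hbound hcomp
  refine ⟨hsum, ?_⟩
  calc (∑' p : {p : ℤ // d < |(p:ℝ)|},
        |(p.1:ℝ)|^(n-2) / ‖lam - ((2*π*(p.1:ℝ) + t : ℝ) : ℂ)^n‖)
      ≤ ∑' p : {p : ℤ // d < |(p:ℝ)|}, 1/((p.1:ℝ))^2 := Summable.tsum_le_tsum hbound hsum hcomp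
    _ ≤ 4/d := Summable.tsum_le_of_sum_le hcomp (tail_sum_bound d (by linarith))
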